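/- Let n ≥ 5 be odd, ϑ := n·cos(π/n)/(1 + cos(π/n)), a := 1/ϑ and b := (n − ϑ)/(2ϑ²). Then for every j ∈ {0,1,…,n−1}, the quantity λ_j := a + 2b·cos(2πj/n) satisfies λ_j ≥ 0, and λ_j = 0 if and only if j = (n−1)/2 or j = (n+1)/2. -/

import Mathlib

open Real Set

lemma key_trig (n m : ℕ) (hm : n = 2*m+1) (hn : 5 ≤ n) (j : ℕ) (hj : j < n) :
    0 ≤ Real.cos (Real.pi / n) + Real.cos (2 * Real.pi * j / n) ∧
      (Real.cos (Real.pi / n) + Real.cos (2 * Real.pi * j / n) = 0 ↔ j = m ∨ j = m + 1) := by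
  have hnR : (5:ℝ) ≤ n := by exact_mod_cast hn
  have hn0 : (0:ℝ) < n := by linarith
  have hpi := Real.pi_pos
  have hπn : Real.pi / n * n = Real.pi := div_mul_cancel₀ _ hn0.ne'
  have hpn : 0 < Real.pi / n := div_pos hpi hn0
  have hmn1 : (2*(m:ℝ)) = (n:ℝ) - 1 := by
    have : ((2*m+1 : ℕ) : ℝ) = (n:ℝ) := by exact_mod_cast congrArg Nat.cast hm.symm
    push_cast at this; linarith
  have hcpi : Real.cos (Real.pi - Real.pi / n) = -Real.cos (Real.pi / n) := Real.cos_pi_sub _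
  have hmem1 : Real.pi - Real.pi / n ∈ Icc 0 Real.pi := by
    constructor
    · have : Real.pi / n ≤ Real.pi := by
        rw [div_le_iff₀ hn0]; nlinarith
      linarith
    · linarith
  rcases le_or_gt j m with hjm | hjm
  · -- j ≤ m, t ≤ π - π/n
    have hjR : (j:ℝ) ≤ m := by exact_mod_cast hjm
    have hle : 2 * Real.pi * j / n ≤ Real.pi - Real.pi / n := by
      rw [div_le_iff₀ hn0]
      have h1 : Real.pi * (2*(j:ℝ)) ≤ Real.pi * ((n:ℝ)-1) := by
        apply mul_le_mul_of_nonneg_left _ hpi.le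
        linarith
      nlinarith [hπn]
    have hmem2 : 2 * Real.pi * j / n ∈ Icc 0 Real.pi := by
      constructor
      · positivity
      · linarith
    have hge : Real.cos (Real.pi - Real.pi / n) ≤ Real.cos (2 * Real.pi * j / n) :=
      Real.strictAntiOn_cos.antitoneOn hmem2 hmem1 hle
    rw [hcpi] at hge
    refine ⟨by linarith, ?_, ?_⟩
    · intro h
      have hceq : Real.cos (2 * Real.pi * j / n) = Real.cos (Real.pi - Real.pi / n) := by
        rw [hcpi]; linarith
      have heq := Real.injOn_cos hmem2 hmem1 hceq
      left
      field_simp at heq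
      have h4 : Real.pi * (2*(j:ℝ)) = Real.pi * ((n:ℝ)-1) := by linear_combination Real.pi * heq
      have h5 := mul_left_cancel₀ Real.pi_ne_zero h4
      have : (j:ℝ) = m := by linarith
      exact_mod_cast this
    · rintro (rfl | h)
      · have heq : 2 * Real.pi * (j:ℝ) / n = Real.pi - Real.pi / n := by
          field_simp
          linear_combination hmn1
        rw [heq, hcpi]; ring
      · omega
  · -- j ≥ m+1
    have hjR : (m:ℝ) + 1 ≤ j := by exact_mod_cast hjm
    have hjn : (j:ℝ) ≤ (n:ℝ) - 1 := by
      have h : (j:ℤ) ≤ (n:ℤ) - 1 := by omega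
      exact_mod_cast h
    have hge' : Real.pi + Real.pi / n ≤ 2 * Real.pi * j / n := by
      rw [le_div_iff₀ hn0]
      have h1 : Real.pi * ((n:ℝ)+1) ≤ Real.pi * (2*(j:ℝ)) := by
        apply mul_le_mul_of_nonneg_left _ hpi.le
        linarith
      nlinarith [hπn]
    have hlt2 : 2 * Real.pi * j / n ≤ 2 * Real.pi - 2 * (Real.pi / n) := by
      rw [div_le_iff₀ hn0]
      have h1 : Real.pi * (2*(j:ℝ)) ≤ Real.pi * (2*(n:ℝ)-2) := by
        apply mul_le_mul_of_nonneg_left _ hpi.le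
        linarith
      nlinarith [hπn]
    have hmem2 : 2 * Real.pi - 2 * Real.pi * j / n ∈ Icc 0 Real.pi := by
      constructor <;> [linarith; linarith]
    have hct : Real.cos (2 * Real.pi - 2 * Real.pi * j / n) = Real.cos (2 * Real.pi * j / n) := by
      rw [Real.cos_sub]; simp
    have hle : 2 * Real.pi - 2 * Real.pi * j / n ≤ Real.pi - Real.pi / n := by linarith
    have hge : Real.cos (Real.pi - Real.pi / n) ≤ Real.cos (2 * Real.pi - 2 * Real.pi * j / n) :=
      Real.strictAntiOn_cos.antitoneOn hmem2 hmem1 hle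
    rw [hcpi, hct] at hge
    refine ⟨by linarith, ?_, ?_⟩
    · intro h
      have hceq : Real.cos (2 * Real.pi - 2 * Real.pi * j / n) = Real.cos (Real.pi - Real.pi / n) := by
        rw [hcpi, hct]; linarith
      have heq := Real.injOn_cos hmem2 hmem1 hceq
      right
      field_simp at heq
      have h4 : Real.pi * (2*(j:ℝ)) = Real.pi * ((n:ℝ)+1) := by linear_combination -Real.pi * heq
      have h5 := mul_left_cancel₀ Real.pi_ne_zero h4
      have : (j:ℝ) = m + 1 := by linarith
      exact_mod_cast this
    · rintro (rfl | rfl)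
      · omega
      · have heq : 2 * Real.pi * ((m:ℝ)+1) / n = Real.pi + Real.pi / n := by
          field_simp
          linear_combination hmn1
        push_cast
        rw [heq, show Real.pi + Real.pi / n = Real.pi - (-(Real.pi/n)) by ring,
          Real.cos_pi_sub, Real.cos_neg]
        ring

/-- Let `n ≥ 5` be odd, `ϑ = n·cos(π/n)/(1 + cos(π/n))`, `a = 1/ϑ`, `b = (n - ϑ)/(2ϑ²)`.
Then for every `j ∈ {0, 1, …, n-1}` the eigenvalue `λ_j = a + 2b·cos(2πj/n)` of the circulant
block of the optimal Lovász theta solution is nonnegative, and it vanishes exactly when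
`j = (n-1)/2` or `j = (n+1)/2`. -/
theorem circulant_eigenvalue_nonneg_and_zero_iff (n : ℕ) (hodd : Odd n) (hn : 5 ≤ n)
    (θ a b : ℝ)
    (hθ : θ = n * Real.cos (Real.pi / n) / (1 + Real.cos (Real.pi / n)))
    (ha : a = 1 / θ)
    (hb : b = (n - θ) / (2 * θ ^ 2))
    (j : ℕ) (hj : j < n) :
    0 ≤ a + 2 * b * Real.cos (2 * Real.pi * j / n) ∧
      (a + 2 * b * Real.cos (2 * Real.pi * j / n) = 0 ↔
        j = (n - 1) / 2 ∨ j = (n + 1) / 2) := by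
  obtain ⟨m, hm⟩ := hodd
  have hm' : n = 2 * m + 1 := by omega
  have hnR : (5:ℝ) ≤ n := by exact_mod_cast hn
  have hn0 : (0:ℝ) < n := by linarith
  have hpi := Real.pi_pos
  set c := Real.cos (Real.pi / n) with hc
  have hcpos : 0 < c := by
    apply Real.cos_pos_of_mem_Ioo
    constructor
    · have := div_pos hpi hn0; linarith
    · rw [div_lt_iff₀ hn0]; nlinarith
  have hθpos : 0 < θ := by
    rw [hθ]; positivity
  have hfact : a + 2 * b * Real.cos (2 * Real.pi * j / n) =
      (1 + c) / (n * c ^ 2) * (c + Real.cos (2 * Real.pi * j / n)) := by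
    rw [ha, hb, hθ]
    field_simp
    ring
  have hcoef : 0 < (1 + c) / (n * c ^ 2) := by positivity
  obtain ⟨h1, h2⟩ := key_trig n m hm' hn j hj
  rw [← hc] at h1 h2
  have hind : (j = (n-1)/2 ∨ j = (n+1)/2) ↔ (j = m ∨ j = m + 1) := by omega
  constructor
  · rw [hfact]; exact mul_nonneg hcoef.le h1
  · rw [hfact, hind, ← h2, mul_eq_zero]
    constructor
    · rintro (h | h)
      · exact absurd h hcoef.ne'
      · exact h
    · exact Or.inr
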